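/- arXiv:1706.00918 — 2 statements merged into one kernel-verified Lean document; each statement's English description precedes it below -/
import Mathlib

section
/- Let G be a finite group, X₁ and X₂ finite G-sets, and X = X₁ ⊔ X₂ their disjoint union (with the componentwise G-action). Then the n-th Cartesian power with its wreath product action decomposes: (X₁ ⊔ X₂)ⁿ with the G_n = Gⁿ ⋊ S_n action is G_n-equivariantly isomorphic to the disjoint union over k = 0,...,n of the induced sets ind_{G_k × G_{n-k}}^{G_n}(X₁^k × X₂^{n-k}), where G_k × G_{n-k} is embedded in G_n in the natural way and acts on X₁^k × X₂^{n-k} componentwise. -/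
/-- Componentwise action of `G × G'` on `X × X'`. -/
instance prodPairAction (G G' X X' : Type*) [Group G] [Group G']
    [MulAction G X] [MulAction G' X'] : MulAction (G × G') (X × X') where
  smul p q := (p.1 • q.1, p.2 • q.2)
  one_smul q := Prod.ext (one_smul G q.1) (one_smul G' q.2)
  mul_smul a b q := Prod.ext (mul_smul a.1 b.1 q.1) (mul_smul a.2 b.2 q.2)
section Ind
variable {K H : Type*} [Group K] [Group H]

/-- The equivalence relation on `H × X` defining the induced `H`-set of a `K`-set `X`
along a homomorphism `f : K →* H`:
`(h₁,x₁) ∼ (h₂,x₂)` iff `∃ g, h₂ = h₁ (f g)⁻¹` and `x₂ = g • x₁`. -/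
def indSetoid (f : K →* H) (X : Type*) [MulAction K X] : Setoid (H × X) where
  r p q := ∃ g : K, q.1 = p.1 * (f g)⁻¹ ∧ q.2 = g • p.2
  iseqv := by
    constructor
    · exact fun p => ⟨1, by simp⟩
    · rintro p q ⟨g, h1, h2⟩
      exact ⟨g⁻¹, by simp [h1, mul_assoc], by simp [h2]⟩
    · rintro p q r ⟨g, h1, h2⟩ ⟨g', h1', h2'⟩
      exact ⟨g' * g, by simp [h1, h1', mul_assoc], by simp [h2, h2', mul_smul]⟩

/-- The induced `H`-set `ind_K^H X = (H × X)/∼`. -/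
def Ind (f : K →* H) (X : Type*) [MulAction K X] : Type _ := Quotient (indSetoid f X)

/-- `H` acts on the induced set by left multiplication on the first coordinate. -/
instance Ind.mulAction (f : K →* H) (X : Type*) [MulAction K X] :
    MulAction H (Ind f X) where
  smul h := Quotient.map (fun p => (h * p.1, p.2))
    (by rintro p q ⟨g, h1, h2⟩; exact ⟨g, by simp [h1, mul_assoc], h2⟩)
  one_smul x := by
    refine Quotient.inductionOn x (fun p => ?_)
    show Quotient.map _ _ _ = _
    simp
  mul_smul a b x := by
    refine Quotient.inductionOn x (fun p => ?_)
    show Quotient.map _ _ _ = Quotient.map _ _ (Quotient.map _ _ _)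
    simp [mul_assoc]

end Ind
section Wreath

variable (G : Type*) [Group G] (ι : Type*)

/-- Permutations of `ι` act on `ι → G` by automorphisms (permuting the factors). -/
def permAut : Equiv.Perm ι →* MulAut (ι → G) where
  toFun σ :=
    { toEquiv := Equiv.arrowCongr σ (Equiv.refl G)
      map_mul' := fun v w => rfl }
  map_one' := by ext v i; rfl
  map_mul' σ τ := by ext v i; rfl

/-- The wreath product `G_ι = G^ι ⋊ Perm ι`. -/
def Wr : Type _ := (ι → G) ⋊[permAut G ι] Equiv.Perm ι

instance : Group (Wr G ι) := inferInstanceAs (Group ((ι → G) ⋊[permAut G ι] Equiv.Perm ι))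

variable {G ι}

/-- The `G^ι`-component of an element of the wreath product. -/
def Wr.l (w : Wr G ι) : ι → G := SemidirectProduct.left w

/-- The `Perm ι`-component of an element of the wreath product. -/
def Wr.p (w : Wr G ι) : Equiv.Perm ι := SemidirectProduct.right w

/-- Building an element of the wreath product from its two components. -/
def Wr.mk (v : ι → G) (σ : Equiv.Perm ι) : Wr G ι := ⟨v, σ⟩

@[simp] lemma Wr.l_mk (v : ι → G) (σ : Equiv.Perm ι) : (Wr.mk v σ).l = v := rfl
@[simp] lemma Wr.p_mk (v : ι → G) (σ : Equiv.Perm ι) : (Wr.mk v σ).p = σ := rfl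
@[simp] lemma Wr.l_one : (1 : Wr G ι).l = 1 := rfl
@[simp] lemma Wr.p_one : (1 : Wr G ι).p = 1 := rfl
@[simp] lemma Wr.l_mul (a b : Wr G ι) : (a * b).l = a.l * fun i => b.l (a.p.symm i) := rfl
@[simp] lemma Wr.p_mul (a b : Wr G ι) : (a * b).p = a.p * b.p := rfl

variable (G ι)

/-- The natural action of the wreath product `G_ι` on `X^ι`:
`S_ι` permutes the factors and `G^ι` acts componentwise. -/
instance wrAction (X : Type*) [MulAction G X] : MulAction (Wr G ι) (ι → X) where
  smul w y := fun i => w.l i • y (w.p.symm i)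
  one_smul y := funext fun i => by
    show (1 : Wr G ι).l i • y ((1 : Wr G ι).p.symm i) = y i
    simp
    rfl
  mul_smul a b y := funext fun i => by
    show (a * b).l i • y ((a * b).p.symm i) =
      a.l i • b.l (a.p.symm i) • y (b.p.symm (a.p.symm i))
    rw [Wr.l_mul, Wr.p_mul, Pi.mul_apply, mul_smul]
    rfl

@[simp] lemma wr_smul_apply {X : Type*} [MulAction G X] (w : Wr G ι) (y : ι → X) (i : ι) :
    (w • y) i = w.l i • y (w.p.symm i) := rfl

end Wreath
section WreathHoms

@[simp] lemma Wr.mk_mul {G : Type*} [Group G] {ι : Type*} (v w : ι → G)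
    (σ τ : Equiv.Perm ι) :
    Wr.mk v σ * Wr.mk w τ = Wr.mk (fun i => v i * w (σ.symm i)) (σ * τ) := rfl

@[simp] lemma Wr.left_mk {G : Type*} [Group G] {ι : Type*} (v : ι → G) (σ : Equiv.Perm ι) :
    SemidirectProduct.left (Wr.mk v σ) = v := rfl

@[simp] lemma Wr.right_mk {G : Type*} [Group G] {ι : Type*} (v : ι → G) (σ : Equiv.Perm ι) :
    SemidirectProduct.right (Wr.mk v σ) = σ := rfl

variable (G : Type*) [Group G]

/-- The natural embedding `G_ι × G_κ → G_{ι ⊕ κ}` of wreath products. -/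
def wrJoin (ι κ : Type*) : Wr G ι × Wr G κ →* Wr G (ι ⊕ κ) where
  toFun p := Wr.mk (Sum.elim p.1.l p.2.l) (Equiv.Perm.sumCongrHom ι κ (p.1.p, p.2.p))
  map_one' := by
    apply SemidirectProduct.ext
    · funext i; cases i <;> rfl
    · show Equiv.Perm.sumCongrHom ι κ (1, 1) = 1
      exact map_one _
  map_mul' p q := by
    show Wr.mk _ _ = Wr.mk _ _ * Wr.mk _ _
    rw [Wr.mk_mul]
    apply SemidirectProduct.ext
    · funext i
      cases i with
      | inl a =>
          show (p.1.l * fun i => q.1.l (p.1.p.symm i)) a = _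
          simp [Equiv.Perm.sumCongrHom]
      | inr b =>
          show (p.2.l * fun i => q.2.l (p.2.p.symm i)) b = _
          simp [Equiv.Perm.sumCongrHom]
    · exact map_mul (Equiv.Perm.sumCongrHom ι κ) (p.1.p, p.2.p) (q.1.p, q.2.p)

/-- Transport of wreath products along a bijection of index sets. -/
def wrCongrHom {ι κ : Type*} (e : ι ≃ κ) : Wr G ι →* Wr G κ where
  toFun w := Wr.mk (w.l ∘ e.symm) (e.permCongr w.p)
  map_one' := by
    apply SemidirectProduct.ext
    · rfl
    · show e.permCongr 1 = 1
      ext x; simp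
  map_mul' a b := by
    show Wr.mk _ _ = Wr.mk _ _ * Wr.mk _ _
    rw [Wr.mk_mul]
    apply SemidirectProduct.ext
    · funext i
      show (a.l * fun i => b.l (a.p.symm i)) (e.symm i) = _
      simp [Equiv.permCongr, Equiv.equivCongr]
    · ext x
      simp [Equiv.permCongr, Equiv.equivCongr, Equiv.Perm.mul_apply]

/-- The homomorphism of wreath products `K_ι → H_ι` induced by `f : K →* H`. -/
def wrMapHom {K H : Type*} [Group K] [Group H] (f : K →* H) (ι : Type*) :
    Wr K ι →* Wr H ι where
  toFun w := Wr.mk (f ∘ w.l) w.p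
  map_one' := by
    apply SemidirectProduct.ext
    · funext i; exact map_one f
    · rfl
  map_mul' a b := by
    show Wr.mk _ _ = Wr.mk _ _ * Wr.mk _ _
    rw [Wr.mk_mul]
    apply SemidirectProduct.ext
    · funext i
      show f ((a.l * fun i => b.l (a.p.symm i)) i) = _
      simp
    · rfl

variable (ι : Type*)

/-- The big `G`-diagonal in `X^ι`: tuples with two coordinates in the same `G`-orbit. -/
def bigDiag (X : Type*) [MulAction G X] : Set (ι → X) :=
  {y | ∃ i j, i ≠ j ∧ y i ∈ MulAction.orbit G (y j)}

/-- The wreath product `G_ι` acts on the complement of the big diagonal in `X^ι`. -/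
instance wrDiagAction (X : Type*) [MulAction G X] :
    MulAction (Wr G ι) {y : ι → X // y ∉ bigDiag G ι X} where
  smul w y := ⟨w • (y : ι → X), by
    rintro ⟨i, j, hij, g, hg⟩
    apply y.2
    refine ⟨w.p.symm i, w.p.symm j, fun h => hij (by simpa using congrArg w.p h), ?_⟩
    refine ⟨(w.l i)⁻¹ * g * w.l j, ?_⟩
    have hg' : g • (w.l j • (y : ι → X) (w.p.symm j)) = w.l i • (y : ι → X) (w.p.symm i) := hg
    calc ((w.l i)⁻¹ * g * w.l j) • (y : ι → X) (w.p.symm j)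
        = (w.l i)⁻¹ • g • w.l j • (y : ι → X) (w.p.symm j) := by
          rw [mul_smul, mul_smul]
      _ = (y : ι → X) (w.p.symm i) := by rw [hg', inv_smul_smul]⟩
  one_smul y := Subtype.ext (one_smul _ (y : ι → X))
  mul_smul a b y := Subtype.ext (mul_smul a b (y : ι → X))

end WreathHoms
/-- The natural embedding `G_k × G_{n-k} → G_n` of wreath products (via the identification
`Fin k ⊕ Fin (n-k) ≃ Fin n`). -/
def wrEmbed (G : Type*) [Group G] (n k : ℕ) (hk : k ≤ n) :
    Wr G (Fin k) × Wr G (Fin (n - k)) →* Wr G (Fin n) :=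
  (wrCongrHom G (finSumFinEquiv.trans (finCongr (by omega)))).comp
    (wrJoin G (Fin k) (Fin (n - k)))

section DecompProof

variable {G : Type} [Group G] {X₁ X₂ : Type} [MulAction G X₁] [MulAction G X₂]

/-- The index equivalence used in `wrEmbed`. -/
def eqvF (n k : ℕ) (hk : k ≤ n) : (Fin k ⊕ Fin (n - k)) ≃ Fin n :=
  finSumFinEquiv.trans (finCongr (by omega))

/-- The standard tuple built from `a` on the first block and `b` on the second. -/
def stdTup {n k : ℕ} (hk : k ≤ n) (a : Fin k → X₁) (b : Fin (n - k) → X₂) :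
    Fin n → X₁ ⊕ X₂ :=
  fun i => Sum.elim (fun j => Sum.inl (a j)) (fun j => Sum.inr (b j)) ((eqvF n k hk).symm i)

lemma wrEmbed_l {n k : ℕ} (hk : k ≤ n) (g : Wr G (Fin k) × Wr G (Fin (n - k))) :
    (wrEmbed G n k hk g).l = fun i => Sum.elim g.1.l g.2.l ((eqvF n k hk).symm i) := rfl

lemma wrEmbed_p {n k : ℕ} (hk : k ≤ n) (g : Wr G (Fin k) × Wr G (Fin (n - k))) :
    (wrEmbed G n k hk g).p = (eqvF n k hk).permCongr (g.1.p.sumCongr g.2.p) := rfl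

lemma smul_stdTup {n k : ℕ} (hk : k ≤ n) (g : Wr G (Fin k) × Wr G (Fin (n - k)))
    (a : Fin k → X₁) (b : Fin (n - k) → X₂) :
    wrEmbed G n k hk g • stdTup hk a b = stdTup hk (g.1 • a) (g.2 • b) := by
  funext i
  rw [wr_smul_apply, wrEmbed_l, wrEmbed_p]
  rcases hx : (eqvF n k hk).symm i with j | j <;>
    simp [stdTup, hx, Equiv.permCongr, Equiv.equivCongr, wr_smul_apply, Sum.smul_inl,
      Sum.smul_inr]

lemma isLeft_smulG (g : G) (s : X₁ ⊕ X₂) : (g • s).isLeft = s.isLeft := by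
  cases s <;> simp [Sum.smul_inl, Sum.smul_inr]

lemma card_isLeft_smul {n : ℕ} (w : Wr G (Fin n)) (y : Fin n → X₁ ⊕ X₂) :
    Fintype.card {i // ((w • y) i).isLeft} = Fintype.card {i // (y i).isLeft} :=
  Fintype.card_congr (Equiv.subtypeEquiv w.p.symm (fun i => by
    rw [wr_smul_apply, isLeft_smulG]))

def sumLeftEquiv (α β : Type*) : {x : α ⊕ β // x.isLeft} ≃ α where
  toFun x := x.1.getLeft x.2
  invFun a := ⟨.inl a, rfl⟩
  left_inv x := Subtype.ext (Sum.eq_left_getLeft_of_isLeft x.2).symm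
  right_inv a := rfl

lemma isLeft_stdTup {n k : ℕ} (hk : k ≤ n) (a : Fin k → X₁) (b : Fin (n - k) → X₂)
    (i : Fin n) : (stdTup hk a b i).isLeft = ((eqvF n k hk).symm i).isLeft := by
  rcases hx : (eqvF n k hk).symm i with j | j <;> simp [stdTup, hx]

lemma card_isLeft_stdTup {n k : ℕ} (hk : k ≤ n) (a : Fin k → X₁) (b : Fin (n - k) → X₂) :
    Fintype.card {i // (stdTup hk a b i).isLeft} = k := by
  have e : {i // (stdTup hk a b i).isLeft} ≃ Fin k :=
    (Equiv.subtypeEquiv (eqvF n k hk).symm (fun i => by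
      rw [isLeft_stdTup])).trans (sumLeftEquiv _ _)
  rw [Fintype.card_congr e, Fintype.card_fin]

lemma stdTup_inj {n k : ℕ} (hk : k ≤ n) {a a' : Fin k → X₁} {b b' : Fin (n - k) → X₂}
    (h : stdTup hk a b = stdTup hk a' b') : a = a' ∧ b = b' := by
  constructor
  · funext j
    have := congrFun h (eqvF n k hk (Sum.inl j))
    simpa [stdTup] using this
  · funext j
    have := congrFun h (eqvF n k hk (Sum.inr j))
    simpa [stdTup] using this

lemma exists_g {n k : ℕ} (hk : k ≤ n) (u : Wr G (Fin n)) (a a' : Fin k → X₁)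
    (b b' : Fin (n - k) → X₂) (h : u • stdTup hk a b = stdTup hk a' b') :
    ∃ g : Wr G (Fin k) × Wr G (Fin (n - k)),
      wrEmbed G n k hk g = u ∧ a' = g.1 • a ∧ b' = g.2 • b := by
  set e := eqvF n k hk with he
  set ρ : Equiv.Perm (Fin k ⊕ Fin (n - k)) := e.permCongr.symm u.p with hρdef
  have hρ_apply : ∀ x, ρ x = e.symm (u.p (e x)) := fun x => rfl
  have hρ_symm : ∀ x, ρ.symm x = e.symm (u.p.symm (e x)) := fun x => rfl
  have hkey : ∀ i, (stdTup hk a' b' i).isLeft = (stdTup hk a b (u.p.symm i)).isLeft := by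
    intro i
    have := congrFun h i
    rw [wr_smul_apply] at this
    rw [← this, isLeft_smulG]
  have hρs : ∀ x : Fin k ⊕ Fin (n - k), (ρ.symm x).isLeft = x.isLeft := by
    intro x
    have := hkey (e x)
    rw [isLeft_stdTup, isLeft_stdTup, Equiv.symm_apply_apply, ← hρ_symm] at this
    exact this.symm
  have hρl : ∀ x : Fin k ⊕ Fin (n - k), (ρ x).isLeft = x.isLeft := by
    intro x
    have := hρs (ρ x)
    rw [Equiv.symm_apply_apply] at this
    exact this.symm
  have hL : ∀ j : Fin k, (ρ (Sum.inl j)).isLeft := fun j => by rw [hρl]; rfl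
  have hR : ∀ j : Fin (n - k), (ρ (Sum.inr j)).isRight := fun j => by
    rw [← Sum.not_isLeft, hρl]; simp
  have hinj1 : Function.Injective (fun j : Fin k => (ρ (Sum.inl j)).getLeft (hL j)) := by
    intro j₁ j₂ hj
    have e1 := Sum.eq_left_getLeft_of_isLeft (hL j₁)
    have e2 := Sum.eq_left_getLeft_of_isLeft (hL j₂)
    have : ρ (Sum.inl j₁) = ρ (Sum.inl j₂) := by rw [e1, e2]; exact congrArg _ hj
    exact Sum.inl_injective (ρ.injective this)
  have hinj2 : Function.Injective
      (fun j : Fin (n - k) => (ρ (Sum.inr j)).getRight (hR j)) := by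
    intro j₁ j₂ hj
    have e1 := Sum.eq_right_getRight_of_isRight (hR j₁)
    have e2 := Sum.eq_right_getRight_of_isRight (hR j₂)
    have : ρ (Sum.inr j₁) = ρ (Sum.inr j₂) := by rw [e1, e2]; exact congrArg _ hj
    exact Sum.inr_injective (ρ.injective this)
  set σ₁ : Equiv.Perm (Fin k) :=
    Equiv.ofBijective _ (Finite.injective_iff_bijective.mp hinj1) with hσ₁
  set σ₂ : Equiv.Perm (Fin (n - k)) :=
    Equiv.ofBijective _ (Finite.injective_iff_bijective.mp hinj2) with hσ₂
  have hσ₁spec : ∀ j, ρ (Sum.inl j) = Sum.inl (σ₁ j) := fun j =>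
    Sum.eq_left_getLeft_of_isLeft (hL j)
  have hσ₂spec : ∀ j, ρ (Sum.inr j) = Sum.inr (σ₂ j) := fun j =>
    Sum.eq_right_getRight_of_isRight (hR j)
  have hu : wrEmbed G n k hk
      (Wr.mk (fun j => u.l (e (Sum.inl j))) σ₁,
       Wr.mk (fun j => u.l (e (Sum.inr j))) σ₂) = u := by
    apply SemidirectProduct.ext
    · funext i
      show Sum.elim (fun j => u.l (e (Sum.inl j))) (fun j => u.l (e (Sum.inr j)))
        (e.symm i) = u.l i
      rcases hx : e.symm i with j | j
      · have hi : e (Sum.inl j) = i := by rw [← hx, Equiv.apply_symm_apply]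
        rw [Sum.elim_inl, hi]
      · have hi : e (Sum.inr j) = i := by rw [← hx, Equiv.apply_symm_apply]
        rw [Sum.elim_inr, hi]
    · refine Equiv.ext fun i => ?_
      show (e.permCongr (σ₁.sumCongr σ₂)) i = u.p i
      rw [Equiv.permCongr_apply]
      rcases hx : e.symm i with j | j
      · have hi : e (Sum.inl j) = i := by rw [← hx, Equiv.apply_symm_apply]
        show e (Sum.inl (σ₁ j)) = u.p i
        rw [← hσ₁spec, hρ_apply, Equiv.apply_symm_apply, hi]
      · have hi : e (Sum.inr j) = i := by rw [← hx, Equiv.apply_symm_apply]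
        show e (Sum.inr (σ₂ j)) = u.p i
        rw [← hσ₂spec, hρ_apply, Equiv.apply_symm_apply, hi]
  have hs := smul_stdTup hk
      (Wr.mk (fun j => u.l (e (Sum.inl j))) σ₁,
       Wr.mk (fun j => u.l (e (Sum.inr j))) σ₂) a b
  rw [hu, h] at hs
  obtain ⟨h1, h2⟩ := stdTup_inj hk hs
  exact ⟨_, hu, h1, h2⟩

def pieceMap {n : ℕ} (k : Fin (n + 1)) :
    Ind (wrEmbed G n k (Fin.is_le k)) ((Fin (k : ℕ) → X₁) × (Fin (n - (k : ℕ)) → X₂)) →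
      (Fin n → X₁ ⊕ X₂) :=
  Quotient.lift (fun p => p.1 • stdTup (Fin.is_le k) p.2.1 p.2.2) (by
    rintro ⟨w, a, b⟩ ⟨w', a', b'⟩ ⟨g, h1, h2⟩
    dsimp only at *
    have ha : a' = g.1 • a := congrArg Prod.fst h2
    have hb : b' = g.2 • b := congrArg Prod.snd h2
    calc w • stdTup (Fin.is_le k) a b
        = (w * (wrEmbed G n k (Fin.is_le k) g)⁻¹) •
            (wrEmbed G n k (Fin.is_le k) g • stdTup (Fin.is_le k) a b) := by
          rw [mul_smul, inv_smul_smul]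
      _ = w' • stdTup (Fin.is_le k) a' b' := by
          rw [h1, ha, hb, smul_stdTup])

def bigMap {n : ℕ} :
    (Σ k : Fin (n + 1),
      Ind (wrEmbed G n k (Fin.is_le k)) ((Fin (k : ℕ) → X₁) × (Fin (n - (k : ℕ)) → X₂))) →
      (Fin n → X₁ ⊕ X₂) :=
  fun q => pieceMap q.1 q.2

lemma bigMap_smul {n : ℕ} (w : Wr G (Fin n))
    (q : Σ k : Fin (n + 1),
      Ind (wrEmbed G n k (Fin.is_le k)) ((Fin (k : ℕ) → X₁) × (Fin (n - (k : ℕ)) → X₂))) :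
    bigMap (w • q) = w • bigMap q := by
  obtain ⟨k, x⟩ := q
  refine Quotient.inductionOn x (fun p => ?_)
  show (w * p.1) • stdTup (Fin.is_le k) p.2.1 p.2.2 =
    w • (p.1 • stdTup (Fin.is_le k) p.2.1 p.2.2)
  rw [mul_smul]

lemma bigMap_surjective {n : ℕ} :
    Function.Surjective (bigMap (G := G) (X₁ := X₁) (X₂ := X₂) (n := n)) := by
  classical
  intro y
  set k : ℕ := Fintype.card {i : Fin n // (y i).isLeft} with hkdef
  have hk : k ≤ n := by
    have := Fintype.card_subtype_le (fun i : Fin n => (y i).isLeft = true)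
    simpa using this
  have hc2 : Fintype.card {i : Fin n // ¬((y i).isLeft = true)} = n - k := by
    rw [Fintype.card_subtype_compl, Fintype.card_fin, hkdef]
  set e₁ : Fin k ≃ {i : Fin n // (y i).isLeft} :=
    (Fintype.equivFinOfCardEq rfl).symm with he₁
  set e₂ : Fin (n - k) ≃ {i : Fin n // ¬((y i).isLeft = true)} :=
    (Fintype.equivFinOfCardEq hc2).symm with he₂
  set c : (Fin k ⊕ Fin (n - k)) ≃ Fin n :=
    (Equiv.sumCongr e₁ e₂).trans (Equiv.sumCompl (fun i => (y i).isLeft = true)) with hc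
  have hcl : ∀ j : Fin k, (y (c (Sum.inl j))).isLeft := fun j => by
    have : c (Sum.inl j) = (e₁ j).1 := by simp [hc]
    rw [this]; exact (e₁ j).2
  have hcr : ∀ j : Fin (n - k), (y (c (Sum.inr j))).isRight := fun j => by
    have : c (Sum.inr j) = (e₂ j).1 := by simp [hc]
    rw [this, ← Sum.not_isLeft]
    simpa using (e₂ j).2
  set a : Fin k → X₁ := fun j => (y (c (Sum.inl j))).getLeft (hcl j) with ha
  set b : Fin (n - k) → X₂ := fun j => (y (c (Sum.inr j))).getRight (hcr j) with hb
  set kf : Fin (n + 1) := ⟨k, by omega⟩ with hkf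
  set σ : Equiv.Perm (Fin n) := (eqvF n k hk).symm.trans c with hσ
  refine ⟨⟨kf, Quotient.mk _ (Wr.mk (1 : Fin n → G) σ, (a, b))⟩, ?_⟩
  show Wr.mk (1 : Fin n → G) σ • stdTup (Fin.is_le kf) a b = y
  funext i
  rw [wr_smul_apply]
  have hl1 : (Wr.mk (1 : Fin n → G) σ).l i = 1 := rfl
  have hp1 : (Wr.mk (1 : Fin n → G) σ).p.symm i = (c.symm i).elim
      (fun j => (eqvF n k hk) (Sum.inl j)) (fun j => (eqvF n k hk) (Sum.inr j)) := by
    show σ.symm i = _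
    rw [hσ]
    rcases hx : c.symm i with j | j <;> simp [hx]
  rw [hl1, one_smul]
  rcases hx : c.symm i with j | j
  · have hi : c (Sum.inl j) = i := by rw [← hx, Equiv.apply_symm_apply]
    rw [hp1, hx]
    show stdTup (Fin.is_le kf) a b ((eqvF n k hk) (Sum.inl j)) = y i
    rw [← hi]
    simp only [stdTup, Equiv.symm_apply_apply, Sum.elim_inl]
    erw [Equiv.symm_apply_apply]
    exact (Sum.eq_left_getLeft_of_isLeft (hcl j)).symm
  · have hi : c (Sum.inr j) = i := by rw [← hx, Equiv.apply_symm_apply]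
    rw [hp1, hx]
    show stdTup (Fin.is_le kf) a b ((eqvF n k hk) (Sum.inr j)) = y i
    rw [← hi]
    simp only [stdTup, Equiv.symm_apply_apply, Sum.elim_inr]
    erw [Equiv.symm_apply_apply]
    exact (Sum.eq_right_getRight_of_isRight (hcr j)).symm

lemma card_isLeft_bigMap {n : ℕ} (k : Fin (n + 1))
    (x : Ind (wrEmbed G n k (Fin.is_le k)) ((Fin (k : ℕ) → X₁) × (Fin (n - (k : ℕ)) → X₂))) :
    Fintype.card {i // ((bigMap ⟨k, x⟩ : Fin n → X₁ ⊕ X₂) i).isLeft} = (k : ℕ) := by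
  refine Quotient.inductionOn x (fun p => ?_)
  show Fintype.card {i // ((p.1 • stdTup (Fin.is_le k) p.2.1 p.2.2) i).isLeft} = (k : ℕ)
  rw [card_isLeft_smul, card_isLeft_stdTup]

lemma bigMap_injective {n : ℕ} :
    Function.Injective (bigMap (G := G) (X₁ := X₁) (X₂ := X₂) (n := n)) := by
  rintro ⟨k, x⟩ ⟨k', x'⟩ h
  have hkk : k = k' := by
    have h1 := card_isLeft_bigMap k x
    have h2 := card_isLeft_bigMap k' x'
    rw [h] at h1
    exact Fin.ext (h1.symm.trans h2)
  subst hkk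
  refine Sigma.ext rfl (heq_of_eq ?_)
  refine Quotient.inductionOn₂ x x' (fun p p' hpp => ?_) h
  obtain ⟨w, a, b⟩ := p
  obtain ⟨w', a', b'⟩ := p'
  have hpp' : w • stdTup (Fin.is_le k) a b = w' • stdTup (Fin.is_le k) a' b' := hpp
  have hu : (w'⁻¹ * w) • stdTup (Fin.is_le k) a b = stdTup (Fin.is_le k) a' b' := by
    rw [mul_smul, hpp', inv_smul_smul]
  obtain ⟨g, hg, hga, hgb⟩ := exists_g (Fin.is_le k) (w'⁻¹ * w) a a' b b' hu
  apply Quotient.sound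
  refine ⟨g, ?_, ?_⟩
  · show w' = w * (wrEmbed G n k (Fin.is_le k) g)⁻¹
    rw [hg]
    group
  · show (a', b') = (g.1 • a, g.2 • b)
    rw [hga, hgb]

end DecompProof

theorem sum_power_decomposes_into_induced_pieces
    (G : Type) [Group G] [Finite G]
    (X₁ X₂ : Type) [MulAction G X₁] [MulAction G X₂] [Finite X₁] [Finite X₂] (n : ℕ) :
    ∃ e : (Fin n → (X₁ ⊕ X₂)) ≃
        Σ k : Fin (n + 1),
          Ind (wrEmbed G n k (Fin.is_le k)) ((Fin (k : ℕ) → X₁) × (Fin (n - (k : ℕ)) → X₂)),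
      ∀ (w : Wr G (Fin n)) (y : Fin n → (X₁ ⊕ X₂)), e (w • y) = w • e y := by
  classical
  have hbij : Function.Bijective (bigMap (G := G) (X₁ := X₁) (X₂ := X₂) (n := n)) :=
    ⟨bigMap_injective, bigMap_surjective⟩
  refine ⟨(Equiv.ofBijective _ hbij).symm, fun w y => ?_⟩
  rw [Equiv.symm_apply_eq]
  show w • y = bigMap (w • (Equiv.ofBijective _ hbij).symm y)
  rw [bigMap_smul]
  congr 1
  exact ((Equiv.ofBijective _ hbij).apply_symm_apply y).symm
end

section
/- Let G ≤ H be finite groups and X a finite G-set. Then for every n ≥ 1, the n-th power of the induced set satisfies (ind_G^H X)ⁿ ≅ ind_{G_n}^{H_n} (Xⁿ) as H_n-sets, where G_n = Gⁿ ⋊ S_n ≤ H_n = Hⁿ ⋊ S_n are the wreath products acting naturally on the Cartesian powers. -/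
section Aux

variable {H : Type} [Group H] (G : Subgroup H) (X : Type) [MulAction G X] (n : ℕ)

@[simp] lemma wrMapHom_l {K H' : Type*} [Group K] [Group H'] (f : K →* H') {ι : Type*}
    (w : Wr K ι) : (wrMapHom f ι w).l = f ∘ w.l := rfl

@[simp] lemma wrMapHom_p {K H' : Type*} [Group K] [Group H'] (f : K →* H') {ι : Type*}
    (w : Wr K ι) : (wrMapHom f ι w).p = w.p := rfl

/-- The map from the induced set of the power to the power of the induced set. -/
def psiFun : Ind (wrMapHom G.subtype (Fin n)) (Fin n → X) → (Fin n → Ind G.subtype X) :=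
  Quotient.lift
    (fun p i => Quotient.mk (indSetoid G.subtype X) (p.1.l i, p.2 (p.1.p.symm i)))
    (by
      rintro p q ⟨g, h1, h2⟩
      funext i
      apply Quotient.sound
      have hp : p.1 = q.1 * wrMapHom G.subtype (Fin n) g := by
        rw [h1]; group
      have hl : p.1.l i = q.1.l i * (g.l (q.1.p.symm i) : H) := by
        have := congrFun (congrArg Wr.l hp) i
        simpa using this
      have hpp : p.1.p = q.1.p * g.p := by
        have := congrArg Wr.p hp
        simpa using this
      have hps : p.1.p.symm i = g.p.symm (q.1.p.symm i) := by
        rw [hpp]; rfl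
      refine ⟨g.l (q.1.p.symm i), ?_, ?_⟩
      · rw [eq_mul_inv_iff_mul_eq]
        exact hl.symm
      · have := congrFun h2 (q.1.p.symm i)
        simpa [hps] using this)

lemma psiFun_mk (p : Wr H (Fin n) × (Fin n → X)) (i : Fin n) :
    psiFun G X n (Quotient.mk _ p) i =
      Quotient.mk (indSetoid G.subtype X) (p.1.l i, p.2 (p.1.p.symm i)) := rfl

lemma psiFun_equivariant (w : Wr H (Fin n))
    (q : Ind (wrMapHom G.subtype (Fin n)) (Fin n → X)) :
    psiFun G X n (w • q) = w • psiFun G X n q := by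
  refine Quotient.inductionOn q (fun p => rfl)

lemma psiFun_injective : Function.Injective (psiFun G X n) := by
  intro q q' h
  refine Quotient.inductionOn₂ q q' (fun p p' hpp' => ?_) h
  apply Quotient.sound
  have key : ∀ i : Fin n, ∃ g : G, p'.1.l i = p.1.l i * (g : H)⁻¹ ∧
      p'.2 (p'.1.p.symm i) = g • p.2 (p.1.p.symm i) := by
    intro i
    have := congrFun hpp' i
    rw [psiFun_mk, psiFun_mk] at this
    exact Quotient.exact this
  choose c hc1 hc2 using key
  refine ⟨Wr.mk (fun j => c (p'.1.p j)) (p'.1.p⁻¹ * p.1.p), ?_, ?_⟩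
  · rw [eq_mul_inv_iff_mul_eq]
    apply SemidirectProduct.ext
    · funext j
      show p'.1.l j * (c (p'.1.p (p'.1.p.symm j)) : H) = p.1.l j
      rw [Equiv.apply_symm_apply, hc1 j]
      group
    · show p'.1.p * (p'.1.p⁻¹ * p.1.p) = p.1.p
      group
  · funext j
    have := hc2 (p'.1.p j)
    rw [Equiv.symm_apply_apply] at this
    exact this

lemma psiFun_surjective : Function.Surjective (psiFun G X n) := by
  intro y
  choose p hp using fun i => Quotient.exists_rep (y i)
  refine ⟨Quotient.mk _ (Wr.mk (fun i => (p i).1) 1, fun i => (p i).2), ?_⟩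
  funext i
  rw [psiFun_mk]
  exact hp i

end Aux

theorem power_of_induced_is_induced_of_power
    (H : Type) [Group H] [Finite H] (G : Subgroup H) (X : Type) [MulAction G X] [Finite X]
    (n : ℕ) :
    ∃ e : (Fin n → Ind G.subtype X) ≃ Ind (wrMapHom G.subtype (Fin n)) (Fin n → X),
      ∀ (w : Wr H (Fin n)) (y : Fin n → Ind G.subtype X), e (w • y) = w • e y := by
  have hb : Function.Bijective (psiFun G X n) :=
    ⟨psiFun_injective G X n, psiFun_surjective G X n⟩
  refine ⟨(Equiv.ofBijective _ hb).symm, fun w y => ?_⟩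
  apply psiFun_injective G X n
  have happ : ∀ z, psiFun G X n ((Equiv.ofBijective _ hb).symm z) = z := fun z =>
    (Equiv.ofBijective _ hb).apply_symm_apply z
  rw [happ, psiFun_equivariant, happ]
end
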